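/- Let m ≥ 2, λ ∈ 𝔽_q^× and 0 ≤ r < hn, and let τ_r ∈ Gal(𝔽_{q^n}/𝔽_p) be u ↦ u^{p^r}. Then the number of monic irreducible polynomials of degree m in 𝔽_q[x] fixed by (λ,τ_r) is |Fix(λ,τ_r)| = (1/m) · ∑_{j=0}^{m−1} ∑_{d | m} μ(d) · N_{r,j}(m/d, λ). -/

import Mathlib

noncomputable section


/-- `N_{r,j}(s,λ)`: the number of `a ∈ 𝔽_{q^s}ˣ` (inside the ambient field `E = 𝔽_{q^m}`)
with `a^{p^r} = λ·a^{q^j}`, where `q = p^h`. -/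
def Ncount (p h : ℕ) (F E : Type*) [Field F] [Field E] [Algebra F E]
    (lam : F) (r j s : ℕ) : ℕ :=
  Nat.card {a : E // a ≠ 0 ∧ a ^ p ^ r = algebraMap F E lam * a ^ (p ^ h) ^ j ∧
    a ^ (p ^ h) ^ s = a}

/-- The action `g^{(λ,τ_r)}(x) = λ^{-m} g^{τ_r}(λx)` on polynomials over `F = 𝔽_q`,
where `τ_r : a ↦ a^{p^r}`. -/
def actFin (p : ℕ) {F : Type*} [Field F] (lam : F) (r m : ℕ) (g : Polynomial F) :
    Polynomial F :=
  ∑ i ∈ g.support, Polynomial.C ((lam ^ m)⁻¹ * g.coeff i ^ p ^ r * lam ^ i) *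
    Polynomial.X ^ i

/-- `I(q,m)`: the monic irreducible polynomials of degree `m` in `F[x]`. -/
def IrrSet (F : Type*) [Field F] (m : ℕ) : Set (Polynomial F) :=
  {g | g.Monic ∧ Irreducible g ∧ g.natDegree = m}

/-- The set of `G`-orbits on `I(q,m)`, where `G = 𝔽_qˣ ⋊ Gal(𝔽_{q^n}/𝔽_p)`. -/
def orbitSet (p h n m : ℕ) (F : Type*) [Field F] : Set (Set (Polynomial F)) :=
  {S | ∃ g ∈ IrrSet F m, S = {g' ∈ IrrSet F m |
    ∃ lam : F, lam ≠ 0 ∧ ∃ r < h * n, g' = actFin p lam r m g}}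

namespace Petit17

open Polynomial Finset

/-- least `s ≥ 1` with `a ^ q ^ s = a`. -/
def dEg {E : Type*} [Field E] (q : ℕ) (a : E) : ℕ := sInf {s | 1 ≤ s ∧ a ^ q ^ s = a}

variable {p h : ℕ} {E : Type*} [Field E]

lemma pow_pow_add (a : E) (q s t : ℕ) : a ^ q ^ (s + t) = (a ^ q ^ s) ^ q ^ t := by
  rw [← pow_mul, ← pow_add]

lemma inj_ppow (hp : p.Prime) [CharP E p] (k : ℕ) :
    Function.Injective fun x : E => x ^ p ^ k := by
  haveI := Fact.mk hp
  intro x y hxy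
  have h1 : (x - y) ^ p ^ k = 0 := by
    rw [sub_pow_char_pow]; simpa using sub_eq_zero.mpr hxy
  have := pow_eq_zero_iff (pow_ne_zero k hp.ne_zero) |>.mp h1
  exact sub_eq_zero.mp this

section dEgLemmas

variable {q : ℕ} (hinj : ∀ k, Function.Injective fun x : E => x ^ q ^ k)

lemma dEg_spec (a : E) (hex : ∃ s, 1 ≤ s ∧ a ^ q ^ s = a) :
    1 ≤ dEg q a ∧ a ^ q ^ dEg q a = a := Nat.sInf_mem hex

lemma pow_dEg_mul (a : E) (hex : ∃ s, 1 ≤ s ∧ a ^ q ^ s = a) (t : ℕ) :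
    a ^ q ^ (dEg q a * t) = a := by
  induction t with
  | zero => simp
  | succ t ih =>
    have : dEg q a * (t + 1) = dEg q a * t + dEg q a := by ring
    rw [this, pow_pow_add, ih, (dEg_spec a hex).2]

include hinj in
lemma pow_dvd_iff (a : E) (hex : ∃ s, 1 ≤ s ∧ a ^ q ^ s = a) (s : ℕ) :
    a ^ q ^ s = a ↔ dEg q a ∣ s := by
  obtain ⟨hd1, hd⟩ := dEg_spec a hex
  constructor
  · intro hs
    set d := dEg q a with hdd
    have hd0 : 0 < d := hd1
    have h1 : a ^ q ^ (d * (s / d)) = a := pow_dEg_mul a hex _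
    have h2 : (a ^ q ^ (s % d)) ^ q ^ (d * (s / d)) = a ^ q ^ (d * (s / d)) := by
      rw [← pow_pow_add]
      rw [h1]
      have : s % d + d * (s / d) = s := by
        rw [add_comm, Nat.div_add_mod]
      rw [this, hs]
    have h3 : a ^ q ^ (s % d) = a := hinj _ h2
    rcases Nat.eq_zero_or_pos (s % d) with h0 | hpos
    · exact Nat.dvd_of_mod_eq_zero h0
    · exfalso
      have : d ≤ s % d := Nat.sInf_le ⟨hpos, h3⟩
      exact absurd (Nat.mod_lt s hd0) (by omega)
  · rintro ⟨t, rfl⟩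
    exact pow_dEg_mul a hex t

include hinj in
lemma conj_dvd (a : E) (hex : ∃ s, 1 ≤ s ∧ a ^ q ^ s = a) {j1 j2 : ℕ} (hle : j1 ≤ j2)
    (hj : a ^ q ^ j1 = a ^ q ^ j2) : dEg q a ∣ j2 - j1 := by
  have h1 : (a ^ q ^ (j2 - j1)) ^ q ^ j1 = a ^ q ^ j1 := by
    rw [← pow_pow_add, Nat.sub_add_cancel hle, hj]
  exact (pow_dvd_iff hinj a hex _).mp (hinj _ h1)

include hinj in
lemma dEg_conj (a : E) (hex : ∃ s, 1 ≤ s ∧ a ^ q ^ s = a) (j : ℕ) :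
    dEg q (a ^ q ^ j) = dEg q a := by
  have key : ∀ s, (a ^ q ^ j) ^ q ^ s = a ^ q ^ j ↔ a ^ q ^ s = a := by
    intro s
    constructor
    · intro hs
      apply hinj j
      calc (a ^ q ^ s) ^ q ^ j = a ^ q ^ (s + j) := (pow_pow_add a q s j).symm
        _ = a ^ q ^ (j + s) := by rw [add_comm]
        _ = (a ^ q ^ j) ^ q ^ s := pow_pow_add a q j s
        _ = a ^ q ^ j := hs
    · intro hs
      calc (a ^ q ^ j) ^ q ^ s = a ^ q ^ (j + s) := (pow_pow_add a q j s).symm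
        _ = a ^ q ^ (s + j) := by rw [add_comm]
        _ = (a ^ q ^ s) ^ q ^ j := pow_pow_add a q s j
        _ = a ^ q ^ j := by rw [hs]
  unfold dEg
  congr 1
  ext s
  simp only [Set.mem_setOf_eq, key]

end dEgLemmas


variable {F : Type*} [Field F] [Fintype F] [Algebra F E]

lemma aeval_pow_hk (hp : p.Prime) [CharP E p] (hF : Fintype.card F = p ^ h)
    (k : ℕ) (g : F[X]) (a : E) :
    aeval (a ^ (p ^ h) ^ k) g = (aeval a g) ^ (p ^ h) ^ k := by
  haveI := Fact.mk hp
  have hkey : ∀ c : F, (algebraMap F E c) ^ (p ^ h) ^ k = algebraMap F E c := by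
    intro c
    rw [← map_pow]
    congr 1
    have := FiniteField.pow_card_pow k c
    rwa [hF] at this
  have hhom : ((iterateFrobenius E p (h * k)).comp
      ((aeval a : F[X] →ₐ[F] E) : F[X] →+* E)) = ((aeval (a ^ (p ^ h) ^ k) : F[X] →ₐ[F] E) : F[X] →+* E) := by
    apply Polynomial.ringHom_ext
    · intro c
      simp only [RingHom.comp_apply, AlgHom.coe_toRingHom, aeval_C, iterateFrobenius_def]
      rw [pow_mul p h k]
      exact hkey c
    · simp only [RingHom.comp_apply, AlgHom.coe_toRingHom, aeval_X, iterateFrobenius_def]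
      rw [pow_mul p h k]
  have := congrArg (fun f : F[X] →+* E => f g) hhom
  simp only [RingHom.comp_apply, AlgHom.coe_toRingHom, iterateFrobenius_def] at this
  rw [← this, ← pow_mul p h k]

lemma conj_root (hp : p.Prime) [CharP E p] (hF : Fintype.card F = p ^ h)
    (g : F[X]) (a : E) (hroot : (aeval a) g = 0) (j : ℕ) :
    aeval (a ^ (p ^ h) ^ j) g = 0 := by
  rw [aeval_pow_hk hp hF, hroot]
  exact zero_pow (pow_ne_zero _ (pow_ne_zero _ hp.ne_zero))


lemma adjoinRoot_fact (hp : p.Prime) (hF : Fintype.card F = p ^ h)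
    (g : F[X]) (hmo : g.Monic) (hirr : Irreducible g) :
    (AdjoinRoot.root g) ^ (p ^ h) ^ g.natDegree = AdjoinRoot.root g ∧
      Nat.card (AdjoinRoot g) = (p ^ h) ^ g.natDegree := by
  haveI := Fact.mk hirr
  have hg0 : g ≠ 0 := hmo.ne_zero
  letI : Fintype (AdjoinRoot g) := Module.fintypeOfFintype (AdjoinRoot.powerBasis hg0).basis
  have hcard : Fintype.card (AdjoinRoot g) = (p ^ h) ^ g.natDegree := by
    rw [Module.card_fintype (AdjoinRoot.powerBasis hg0).basis, hF]
    congr 1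
    simp [AdjoinRoot.powerBasis]
    exact Fintype.card_fin _
  constructor
  · rw [← hcard]
    exact FiniteField.pow_card _
  · rw [Nat.card_eq_fintype_card, hcard]

lemma minpoly_natDegree_eq_dEg (hp : p.Prime) [CharP E p] [Fintype E]
    (hF : Fintype.card F = p ^ h) {m : ℕ} (hm : 1 ≤ m) (hE : Fintype.card E = p ^ (h * m))
    (a : E) : (minpoly F a).natDegree = dEg (p ^ h) a := by
  classical
  haveI := Fact.mk hp
  have hcard2 : 1 < Fintype.card F := Fintype.one_lt_card
  have hh0 : h ≠ 0 := by rintro rfl; rw [pow_zero] at hF; omega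
  set q := p ^ h with hqdef
  have hq1 : 1 < q := Nat.one_lt_pow hh0 hp.one_lt
  have hall : ∀ b : E, b ^ q ^ m = b := by
    intro b
    have := FiniteField.pow_card b
    rwa [hE, pow_mul] at this
  have hinj : ∀ k, Function.Injective fun x : E => x ^ q ^ k := by
    intro k
    have := inj_ppow (E := E) hp (h * k)
    simpa [pow_mul] using this
  have hex : ∀ b : E, ∃ s, 1 ≤ s ∧ b ^ q ^ s = b := fun b => ⟨m, hm, hall b⟩
  have hint : IsIntegral F a := by
    refine ⟨X ^ q ^ m - X, ?_, ?_⟩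
    · have hnd : (X ^ q ^ m - X : F[X]).natDegree = q ^ m :=
        FiniteField.X_pow_card_sub_X_natDegree_eq F (Nat.one_lt_pow (by omega) hq1)
      have h2 : 1 < q ^ m := Nat.one_lt_pow (by omega) hq1
      have hco : (X ^ q ^ m - X : F[X]).coeff (q ^ m) = 1 := by
        rw [coeff_sub, coeff_X_pow, coeff_X, if_pos rfl, if_neg (by omega)]
        ring
      unfold Polynomial.Monic Polynomial.leadingCoeff
      rw [hnd, hco]
    · simp [hall a]
  set g := minpoly F a with hgdef
  have hirr : Irreducible g := minpoly.irreducible hint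
  have hmo : g.Monic := minpoly.monic hint
  set d := g.natDegree with hddef
  set e := dEg q a with hedef
  have hd1 : 1 ≤ d := minpoly.natDegree_pos hint
  obtain ⟨he1, hae⟩ := dEg_spec a (hex a)
  -- e ∣ d
  obtain ⟨hroot_pow, hcardAR⟩ := adjoinRoot_fact hp hF g hmo hirr
  haveI := Fact.mk hirr
  have h0 : g.eval₂ (algebraMap F E) a = 0 := by
    rw [← aeval_def]
    exact minpoly.aeval F a
  set ψ : AdjoinRoot g →+* E := AdjoinRoot.lift (algebraMap F E) a h0 with hψdef
  have hψroot : ψ (AdjoinRoot.root g) = a := AdjoinRoot.lift_root h0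
  have haqd : a ^ q ^ d = a := by
    rw [← hψroot, ← map_pow, hroot_pow]
  have hed : e ∣ d := (pow_dvd_iff hinj a (hex a) d).mp haqd
  -- d ≤ e
  have hψfix : ∀ y : AdjoinRoot g, (ψ y) ^ q ^ e = ψ y := by
    intro y
    obtain ⟨P, rfl⟩ := AdjoinRoot.mk_surjective y
    rw [AdjoinRoot.lift_mk, ← aeval_def, hqdef, ← aeval_pow_hk hp hF e P a, ← hqdef, hae]
  have hψinj : Function.Injective ψ := ψ.injective
  set Sfin : Finset E := univ.filter (fun x : E => x ^ q ^ e = x) with hSfin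
  have hmemS : ∀ y : AdjoinRoot g, ψ y ∈ Sfin := by
    intro y
    rw [hSfin, Finset.mem_filter]
    exact ⟨Finset.mem_univ _, hψfix y⟩
  have hinj2 : Function.Injective (fun y : AdjoinRoot g =>
      (⟨ψ y, hmemS y⟩ : {x // x ∈ Sfin})) := by
    intro y1 y2 hy
    exact hψinj (congrArg Subtype.val hy)
  have hle1 : Nat.card (AdjoinRoot g) ≤ Nat.card {x // x ∈ Sfin} :=
    Nat.card_le_card_of_injective _ hinj2
  have hcardS : Nat.card {x // x ∈ Sfin} = Sfin.card := by
    rw [Nat.card_eq_fintype_card, Fintype.card_coe]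
  have hqe1 : 1 < q ^ e := Nat.one_lt_pow (by omega) hq1
  have hSsub : Sfin ⊆ (X ^ q ^ e - X : E[X]).roots.toFinset := by
    intro x hx
    rw [hSfin, Finset.mem_filter] at hx
    rw [Multiset.mem_toFinset, mem_roots']
    refine ⟨FiniteField.X_pow_card_sub_X_ne_zero E hqe1, ?_⟩
    simp only [IsRoot, eval_sub, eval_pow, eval_X]
    rw [hx.2, sub_self]
  have hSle : Sfin.card ≤ q ^ e := by
    calc Sfin.card ≤ (X ^ q ^ e - X : E[X]).roots.toFinset.card :=
          Finset.card_le_card hSsub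
      _ ≤ Multiset.card (X ^ q ^ e - X : E[X]).roots := Multiset.toFinset_card_le _
      _ ≤ (X ^ q ^ e - X : E[X]).natDegree := card_roots' _
      _ = q ^ e := FiniteField.X_pow_card_sub_X_natDegree_eq E hqe1
  have hpow : q ^ d ≤ q ^ e := by
    have := hle1
    rw [hcardAR, hcardS] at this
    exact le_trans this hSle
  have hde : d ≤ e := (Nat.pow_le_pow_iff_right hq1).mp hpow
  have hed' : e ≤ d := Nat.le_of_dvd (by omega) hed
  omega

lemma one_lt_q {F : Type*} [Field F] [Fintype F] (hp : p.Prime) (hF : Fintype.card F = p ^ h) :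
    1 < p ^ h := by
  have : 1 < Fintype.card F := Fintype.one_lt_card
  omega

lemma inj_q (hp : p.Prime) [CharP E p] :
    ∀ k, Function.Injective fun x : E => x ^ (p ^ h) ^ k := by
  intro k
  have := inj_ppow (E := E) hp (h * k)
  simpa [pow_mul] using this

lemma exists_fix [Fintype E] {m : ℕ} (hm : 1 ≤ m) (hE : Fintype.card E = p ^ (h * m)) :
    ∀ b : E, ∃ s, 1 ≤ s ∧ b ^ (p ^ h) ^ s = b := by
  intro b
  refine ⟨m, hm, ?_⟩
  have := FiniteField.pow_card b
  rwa [hE, pow_mul] at this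

lemma conj_inj (hp : p.Prime) [CharP E p] (a : E)
    (hex : ∃ s, 1 ≤ s ∧ a ^ (p ^ h) ^ s = a) :
    ∀ j1 < dEg (p ^ h) a, ∀ j2 < dEg (p ^ h) a,
      a ^ (p ^ h) ^ j1 = a ^ (p ^ h) ^ j2 → j1 = j2 := by
  have hinj := inj_q (E := E) (h := h) hp
  intro j1 hj1 j2 hj2 hval
  rcases le_total j1 j2 with hle | hle
  · have hdvd := conj_dvd hinj a hex hle hval
    rcases Nat.eq_zero_or_pos (j2 - j1) with h0 | hpos
    · omega
    · have := Nat.le_of_dvd hpos hdvd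
      omega
  · have hdvd := conj_dvd hinj a hex hle hval.symm
    rcases Nat.eq_zero_or_pos (j1 - j2) with h0 | hpos
    · omega
    · have := Nat.le_of_dvd hpos hdvd
      omega

lemma actFin_coeff (p : ℕ) (hp : p ≠ 0) {F : Type*} [Field F] (lam : F) (r m k : ℕ)
    (g : F[X]) :
    (actFin p lam r m g).coeff k = (lam ^ m)⁻¹ * g.coeff k ^ p ^ r * lam ^ k := by
  unfold actFin
  rw [finset_sum_coeff]
  simp only [coeff_C_mul, coeff_X_pow, mul_ite, mul_one, mul_zero]
  rw [Finset.sum_ite_eq g.support k (fun i => (lam ^ m)⁻¹ * g.coeff i ^ p ^ r * lam ^ i)]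
  by_cases hk : k ∈ g.support
  · rw [if_pos hk]
  · rw [if_neg hk, notMem_support_iff.mp hk,
      zero_pow (pow_ne_zero r hp), mul_zero, zero_mul]

lemma actFin_monic {p r m : ℕ} (hp : p ≠ 0) {F : Type*} [Field F] {lam : F}
    (hlam : lam ≠ 0) {g : F[X]} (hmo : g.Monic) (hdeg : g.natDegree = m) :
    (actFin p lam r m g).Monic ∧ (actFin p lam r m g).natDegree = m := by
  have hcm : (actFin p lam r m g).coeff m = 1 := by
    rw [actFin_coeff p hp, ← hdeg, hmo.coeff_natDegree, one_pow, mul_one, hdeg,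
      inv_mul_cancel₀ (pow_ne_zero m hlam)]
  have hle : (actFin p lam r m g).natDegree ≤ m := by
    rw [natDegree_le_iff_coeff_eq_zero]
    intro N hN
    rw [actFin_coeff p hp, coeff_eq_zero_of_natDegree_lt (by omega),
      zero_pow (pow_ne_zero r hp), mul_zero, zero_mul]
  have hge : m ≤ (actFin p lam r m g).natDegree :=
    le_natDegree_of_ne_zero (hcm ▸ one_ne_zero)
  exact ⟨Polynomial.monic_of_natDegree_le_of_coeff_eq_one m hle hcm,
    le_antisymm hle hge⟩

lemma sum_pow_char (hp : p.Prime) [CharP E p] (r : ℕ) {ι : Type*} (s : Finset ι)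
    (f : ι → E) : (∑ i ∈ s, f i) ^ p ^ r = ∑ i ∈ s, f i ^ p ^ r := by
  haveI := Fact.mk hp
  have h1 := map_sum (iterateFrobenius E p r) f s
  simp only [iterateFrobenius_def] at h1
  exact h1

lemma aeval_support {F : Type*} [Field F] [Algebra F E] (g : F[X]) (z : E) :
    aeval z g = ∑ i ∈ g.support, algebraMap F E (g.coeff i) * z ^ i := by
  conv_lhs => rw [as_sum_support_C_mul_X_pow g]
  rw [map_sum]
  simp only [map_mul, aeval_C, map_pow, aeval_X]

lemma aeval_actFin (hp : p.Prime) [CharP E p] {F : Type*} [Field F] [Algebra F E]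
    {lam : F} (hlam : lam ≠ 0) (r m : ℕ) (g : F[X]) (z : E) :
    aeval ((algebraMap F E lam)⁻¹ * z ^ p ^ r) (actFin p lam r m g)
      = algebraMap F E ((lam ^ m)⁻¹) * (aeval z g) ^ p ^ r := by
  have hιlam : algebraMap F E lam ≠ 0 := by
    intro hcon
    exact hlam ((algebraMap F E).injective (by rw [hcon, map_zero]))
  rw [aeval_support g z, sum_pow_char hp r, Finset.mul_sum]
  unfold actFin
  rw [map_sum]
  apply Finset.sum_congr rfl
  intro i hi
  simp only [map_mul, aeval_C, map_pow, aeval_X, map_inv₀]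
  field_simp
  have hL : (algebraMap F E lam) ^ i * ((algebraMap F E lam)⁻¹) ^ i = 1 := by
    rw [← mul_pow, mul_inv_cancel₀ hιlam, one_pow]
  linear_combination ((algebraMap F E) (g.coeff i) ^ p ^ r * z ^ (p ^ r * i)) * hL

lemma root_mem_conj (hp : p.Prime) [CharP E p] [Fintype E] {F : Type*} [Field F]
    [Fintype F] [Algebra F E] (hF : Fintype.card F = p ^ h) {m : ℕ} (hm : 1 ≤ m)
    (hE : Fintype.card E = p ^ (h * m)) (g : F[X]) (a z : E) (hirr : Irreducible g)
    (hroot : aeval a g = 0) (hdeg : g.natDegree = dEg (p ^ h) a) (hz : aeval z g = 0) :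
    ∃ j, j < dEg (p ^ h) a ∧ z = a ^ (p ^ h) ^ j := by
  classical
  set q := p ^ h with hqdef
  have hex := exists_fix (E := E) hm hE
  set d := dEg q a with hddef
  obtain ⟨hd1, had⟩ := dEg_spec a (hex a)
  set conj : Finset E := (range d).image (fun j => a ^ q ^ j) with hconj
  have hcard : conj.card = d := by
    rw [hconj, Finset.card_image_of_injOn, Finset.card_range]
    intro j1 hj1 j2 hj2 hval
    exact conj_inj hp a (hex a) j1 (mem_range.mp hj1) j2 (mem_range.mp hj2) hval
  have hg0 : g ≠ 0 := hirr.ne_zero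
  have hmap0 : g.map (algebraMap F E) ≠ 0 :=
    (Polynomial.map_ne_zero_iff (algebraMap F E).injective).mpr hg0
  have hroot_mem : ∀ x : E, aeval x g = 0 → x ∈ (g.map (algebraMap F E)).roots.toFinset := by
    intro x hx
    rw [Multiset.mem_toFinset, mem_roots']
    exact ⟨hmap0, by rwa [IsRoot, eval_map, ← aeval_def]⟩
  have hconj_sub : conj ⊆ (g.map (algebraMap F E)).roots.toFinset := by
    intro x hx
    rw [hconj, Finset.mem_image] at hx
    obtain ⟨j, _, rfl⟩ := hx
    exact hroot_mem _ (conj_root hp hF g a hroot j)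
  by_contra hcon
  push_neg at hcon
  have hznot : z ∉ conj := by
    intro hmem
    rw [hconj, Finset.mem_image] at hmem
    obtain ⟨j, hj, hval⟩ := hmem
    exact absurd hval.symm (hcon j (mem_range.mp hj))
  have hsub2 : insert z conj ⊆ (g.map (algebraMap F E)).roots.toFinset :=
    Finset.insert_subset (hroot_mem z hz) hconj_sub
  have hbound : (insert z conj).card ≤ d := by
    calc (insert z conj).card ≤ (g.map (algebraMap F E)).roots.toFinset.card :=
          Finset.card_le_card hsub2
      _ ≤ Multiset.card (g.map (algebraMap F E)).roots := Multiset.toFinset_card_le _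
      _ ≤ (g.map (algebraMap F E)).natDegree := card_roots' _
      _ = d := by rw [Polynomial.natDegree_map_eq_of_injective (algebraMap F E).injective, hdeg]
  rw [Finset.card_insert_of_notMem hznot, hcard] at hbound
  omega

lemma dvd_X_pow_card {F : Type*} [Field F] [Fintype F] (hp : p.Prime)
    (hF : Fintype.card F = p ^ h) (g : F[X]) (hmo : g.Monic) (hirr : Irreducible g) :
    g ∣ X ^ (p ^ h) ^ g.natDegree - X := by
  haveI := Fact.mk hirr
  obtain ⟨hroot_pow, -⟩ := adjoinRoot_fact hp hF g hmo hirr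
  have hminp : minpoly F (AdjoinRoot.root g) = g := by
    rw [AdjoinRoot.minpoly_root hmo.ne_zero, hmo.leadingCoeff, inv_one, map_one, mul_one]
  rw [← hminp]
  apply minpoly.dvd
  rw [map_sub, map_pow, aeval_X, hminp, hroot_pow, sub_self]

lemma exists_root_in (hp : p.Prime) [Fintype E] {F : Type*} [Field F] [Fintype F]
    [Algebra F E] (hF : Fintype.card F = p ^ h) {m : ℕ} (hm : 1 ≤ m)
    (hE : Fintype.card E = p ^ (h * m)) (g : F[X]) (hmo : g.Monic) (hirr : Irreducible g)
    (hdeg : g.natDegree = m) : ∃ a : E, aeval a g = 0 := by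
  have hq1 : 1 < p ^ h := one_lt_q hp hF
  have hqm1 : 1 < (p ^ h) ^ m := Nat.one_lt_pow (by omega) hq1
  have hdvd : g ∣ X ^ (p ^ h) ^ m - X := by
    have := dvd_X_pow_card hp hF g hmo hirr
    rwa [hdeg] at this
  have hcard : Fintype.card E = (p ^ h) ^ m := by rw [hE, pow_mul]
  have hne : (X ^ (p ^ h) ^ m - X : F[X]) ≠ 0 :=
    FiniteField.X_pow_card_sub_X_ne_zero F hqm1
  have hsp : Splits ((X ^ (p ^ h) ^ m - X : F[X]).map (algebraMap F E)) := by
    have hmapeq : (X ^ (p ^ h) ^ m - X : F[X]).map (algebraMap F E)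
        = (X ^ (p ^ h) ^ m - X : E[X]) := by
      simp [Polynomial.map_sub, Polynomial.map_pow]
    rw [hmapeq, splits_iff_card_roots]
    have hroots : (X ^ (p ^ h) ^ m - X : E[X]).roots = Finset.univ.val := by
      have := FiniteField.roots_X_pow_card_sub_X E
      rwa [hcard] at this
    rw [hroots, FiniteField.X_pow_card_sub_X_natDegree_eq E hqm1]
    simpa using hcard
  have hspg : Splits (g.map (algebraMap F E)) :=
    hsp.of_dvd (Polynomial.map_ne_zero hne) (Polynomial.map_dvd _ hdvd)
  have hdeg0 : (g.map (algebraMap F E)).degree ≠ 0 := by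
    rw [degree_map, degree_eq_natDegree hmo.ne_zero, hdeg]
    simp only [ne_eq, Nat.cast_eq_zero]
    omega
  obtain ⟨a, ha⟩ := hspg.exists_eval_eq_zero hdeg0
  exact ⟨a, by rwa [aeval_def, eval₂_eq_eval_map]⟩

lemma monic_dvd_eq {F : Type*} [Field F] {g f : F[X]} (hg : g.Monic) (hf : f.Monic)
    (hdvd : g ∣ f) (hdeg : f.natDegree = g.natDegree) : f = g := by
  obtain ⟨c, rfl⟩ := hdvd
  have hc0 : c ≠ 0 := by
    intro hcon
    rw [hcon, mul_zero] at hf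
    exact hf.ne_zero rfl
  have hnd : (g * c).natDegree = g.natDegree + c.natDegree :=
    natDegree_mul hg.ne_zero hc0
  have hcnd : c.natDegree = 0 := by omega
  have hcC : c = C (c.coeff 0) := eq_C_of_natDegree_eq_zero hcnd
  have hlc : (g * c).leadingCoeff = 1 := hf
  rw [leadingCoeff_mul, hg.leadingCoeff, one_mul] at hlc
  rw [hcC, leadingCoeff_C] at hlc
  rw [hcC, hlc, map_one, mul_one]

lemma algebraMap_pow_q {F : Type*} [Field F] [Fintype F] [Algebra F E]
    (hF : Fintype.card F = p ^ h) (c : F) (k : ℕ) :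
    (algebraMap F E c) ^ (p ^ h) ^ k = algebraMap F E c := by
  rw [← map_pow]
  congr 1
  have := FiniteField.pow_card_pow k c
  rwa [hF] at this

lemma charP_of_card (p k : ℕ) (hp : p.Prime) (hk : k ≠ 0) (K : Type*) [Field K]
    [Fintype K] (hK : Fintype.card K = p ^ k) : CharP K p := by
  haveI := ringChar.charP K
  obtain ⟨n, hprime, hcard⟩ := FiniteField.card K (ringChar K)
  rw [hK] at hcard
  have hdvd : p ∣ ringChar K ^ (n : ℕ) := hcard ▸ dvd_pow_self p hk
  have heq : p = ringChar K :=
    (Nat.prime_dvd_prime_iff_eq hp hprime).mp (hp.dvd_of_dvd_pow hdvd)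
  rw [heq]
  exact ringChar.charP K

lemma moebius_count (hp : p.Prime) [CharP E p] [Fintype E] {F : Type*} [Field F]
    [Fintype F] [Algebra F E] (hF : Fintype.card F = p ^ h) {m : ℕ} (hm : 1 ≤ m)
    (hE : Fintype.card E = p ^ (h * m)) (lam : F) (r j : ℕ) :
    (∑ d ∈ m.divisors, (ArithmeticFunction.moebius d : ℤ) *
        (Ncount p h F E lam r j (m / d) : ℤ))
      = (Nat.card {a : E // (a ≠ 0 ∧
          a ^ p ^ r = algebraMap F E lam * a ^ (p ^ h) ^ j) ∧
          dEg (p ^ h) a = m} : ℤ) := by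
  classical
  set q := p ^ h with hqdef
  have hex := exists_fix (E := E) hm hE
  have hinj := inj_q (E := E) (h := h) hp
  set P : E → Prop := fun a => a ≠ 0 ∧ a ^ p ^ r = algebraMap F E lam * a ^ q ^ j with hP
  have hNc : ∀ s : ℕ, Ncount p h F E lam r j s
      = (univ.filter (fun a : E => P a ∧ a ^ q ^ s = a)).card := by
    intro s
    rw [show Ncount p h F E lam r j s = Nat.card {a : E // a ≠ 0 ∧
      a ^ p ^ r = algebraMap F E lam * a ^ q ^ j ∧ a ^ q ^ s = a} from rfl]
    rw [Nat.card_eq_fintype_card, Fintype.card_subtype]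
    congr 1
    apply Finset.filter_congr
    intro a _
    rw [hP]
    constructor
    · rintro ⟨h1, h2, h3⟩; exact ⟨⟨h1, h2⟩, h3⟩
    · rintro ⟨⟨h1, h2⟩, h3⟩; exact ⟨h1, h2, h3⟩
  set gcnt : ℕ → ℕ := fun e => (univ.filter (fun a : E => P a ∧ dEg q a = e)).card
    with hgcnt
  have hkeyN : ∀ n : ℕ, 0 < n →
      (∑ e ∈ n.divisors, gcnt e) = Ncount p h F E lam r j n := by
    intro n hn
    rw [hNc n]
    rw [Finset.card_eq_sum_card_fiberwise (f := fun a : E => dEg q a)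
      (t := n.divisors) ?memdiv]
    case memdiv =>
      intro a ha
      rw [Finset.mem_coe, mem_filter] at ha
      exact Nat.mem_divisors.mpr ⟨(pow_dvd_iff hinj a (hex a) n).mp ha.2.2, by omega⟩
    apply Finset.sum_congr rfl
    intro e he
    show (univ.filter (fun a : E => P a ∧ dEg q a = e)).card = _
    rw [Finset.filter_filter]
    apply Finset.card_bij (fun a _ => a) ?h1 (fun _ _ _ _ hab => hab) ?h2
    case h1 =>
      intro a ha
      rw [mem_filter] at ha ⊢
      refine ⟨ha.1, ⟨ha.2.1, ?_⟩, ha.2.2⟩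
      exact (pow_dvd_iff hinj a (hex a) n).mpr
        (ha.2.2 ▸ Nat.dvd_of_mem_divisors he)
    case h2 =>
      intro a ha
      rw [mem_filter] at ha
      exact ⟨a, by rw [mem_filter]; exact ⟨ha.1, ha.2.1.1, ha.2.2⟩, rfl⟩
  have hkey : ∀ n : ℕ, n > 0 → n ∈ (Set.univ : Set ℕ) →
      (∑ e ∈ n.divisors, (gcnt e : ℤ)) = (Ncount p h F E lam r j n : ℤ) := by
    intro n hn _
    exact_mod_cast congrArg (Nat.cast : ℕ → ℤ) (hkeyN n hn)
  have hinv := (ArithmeticFunction.sum_eq_iff_sum_smul_moebius_eq_on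
    (R := ℤ) (f := fun e => (gcnt e : ℤ))
    (g := fun s => (Ncount p h F E lam r j s : ℤ))
    Set.univ (fun _ _ _ _ => trivial)).mp hkey m (by omega) trivial
  simp only [zsmul_eq_mul, Int.cast_id] at hinv
  rw [← Nat.sum_divisorsAntidiagonal
    (f := fun d e => (ArithmeticFunction.moebius d : ℤ) *
      (Ncount p h F E lam r j e : ℤ))]
  rw [hinv]
  have hconv : Nat.card {a : E // (a ≠ 0 ∧
      a ^ p ^ r = algebraMap F E lam * a ^ (p ^ h) ^ j) ∧
      dEg (p ^ h) a = m} = gcnt m := by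
    rw [Nat.card_eq_fintype_card, Fintype.card_subtype, hgcnt]
  exact_mod_cast hconv.symm

end Petit17

open Petit17 Polynomial Finset in
/-- **Statement 17.** The number of monic irreducible polynomials of degree `m` in
`𝔽_q[x]` fixed by `(λ, τ_r)` is `(1/m) ∑_{j<m} ∑_{d∣m} μ(d) N_{r,j}(m/d, λ)`. -/
theorem petit_stmt17 (p h n m : ℕ) (hp : p.Prime) (hh : 1 ≤ h) (hn : 2 ≤ n) (hm : 2 ≤ m)
    (F E : Type*) [Field F] [Field E] [Fintype F] [Fintype E] [Algebra F E]
    (hF : Fintype.card F = p ^ h) (hE : Fintype.card E = p ^ (h * m))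
    (lam : F) (hlam : lam ≠ 0) (r : ℕ) (hr : r < h * n) :
    (Nat.card {g : Polynomial F // g ∈ IrrSet F m ∧ actFin p lam r m g = g} : ℚ) =
      (1 / (m : ℚ)) * ∑ j ∈ Finset.range m, ∑ d ∈ m.divisors,
        (ArithmeticFunction.moebius d : ℚ) *
          (Ncount p h F E lam r j (m / d) : ℚ) := by
  classical
  have hm1 : 1 ≤ m := by omega
  have hhm0 : h * m ≠ 0 := by positivity
  haveI hchE : CharP E p := charP_of_card p (h * m) hp hhm0 E hE
  haveI := Fact.mk hp
  have hq1 : 1 < p ^ h := one_lt_q hp hF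
  have hιinj : Function.Injective (algebraMap F E) := (algebraMap F E).injective
  have hιlam : algebraMap F E lam ≠ 0 := fun hcon =>
    hlam (hιinj (by rw [hcon, map_zero]))
  have hex := exists_fix (E := E) hm1 hE
  have hinj := inj_q (E := E) (h := h) hp
  have hall : ∀ b : E, b ^ (p ^ h) ^ m = b := by
    intro b
    have := FiniteField.pow_card b
    rwa [hE, pow_mul] at this
  have hdegdEg : ∀ a : E, (minpoly F a).natDegree = dEg (p ^ h) a := fun a =>
    minpoly_natDegree_eq_dEg hp hF hm1 hE a
  have hint : ∀ a : E, IsIntegral F a := by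
    intro a
    have hqm1 : 1 < (p ^ h) ^ m := Nat.one_lt_pow (by omega) hq1
    refine ⟨X ^ (p ^ h) ^ m - X, ?_, ?_⟩
    · have hnd : (X ^ (p ^ h) ^ m - X : F[X]).natDegree = (p ^ h) ^ m :=
        FiniteField.X_pow_card_sub_X_natDegree_eq F hqm1
      have hco : (X ^ (p ^ h) ^ m - X : F[X]).coeff ((p ^ h) ^ m) = 1 := by
        rw [coeff_sub, coeff_X_pow, coeff_X, if_pos rfl, if_neg (by omega)]
        ring
      unfold Polynomial.Monic Polynomial.leadingCoeff
      rw [hnd, hco]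
    · simp [hall a]
  -- uniqueness of j
  have huniq : ∀ a : E, dEg (p ^ h) a = m → ∀ j1, j1 < m → ∀ j2, j2 < m →
      a ^ p ^ r = algebraMap F E lam * a ^ (p ^ h) ^ j1 →
      a ^ p ^ r = algebraMap F E lam * a ^ (p ^ h) ^ j2 → j1 = j2 := by
    intro a hdm j1 hj1 j2 hj2 h1 h2
    have hmul : algebraMap F E lam * a ^ (p ^ h) ^ j1
        = algebraMap F E lam * a ^ (p ^ h) ^ j2 := by rw [← h1, ← h2]
    exact conj_inj hp a (hex a) j1 (by omega) j2 (by omega)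
      (mul_left_cancel₀ hιlam hmul)
  set Afin : Finset E := univ.filter (fun a : E => a ≠ 0 ∧ dEg (p ^ h) a = m ∧
    ∃ j, j < m ∧ a ^ p ^ r = algebraMap F E lam * a ^ (p ^ h) ^ j) with hAfin
  set jdx : E → ℕ := fun a =>
    sInf {j | a ^ p ^ r = algebraMap F E lam * a ^ (p ^ h) ^ j} with hjdx
  -- Step B1 : Afin.card = ∑_j (count of a with rel_j and dEg = m)
  have hB1 : Afin.card = ∑ j ∈ range m, (univ.filter (fun a : E => (a ≠ 0 ∧
      a ^ p ^ r = algebraMap F E lam * a ^ (p ^ h) ^ j) ∧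
      dEg (p ^ h) a = m)).card := by
    rw [Finset.card_eq_sum_card_fiberwise (f := jdx) (t := range m) ?hmem]
    case hmem =>
      intro a ha
      rw [hAfin, Finset.mem_coe, mem_filter] at ha
      obtain ⟨-, -, hdm, j, hjm, hrelj⟩ := ha
      rw [Finset.mem_coe, mem_range, hjdx]
      exact lt_of_le_of_lt (Nat.sInf_le hrelj) hjm
    apply Finset.sum_congr rfl
    intro j hj
    rw [mem_range] at hj
    congr 1
    apply Finset.ext
    intro a
    simp only [mem_filter, mem_univ, true_and, hAfin]
    constructor
    · rintro ⟨⟨hne, hdm, j0, hj0, hrel0⟩, hjda⟩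
      have hnonempty : {i | a ^ p ^ r = algebraMap F E lam * a ^ (p ^ h) ^ i}.Nonempty :=
        ⟨j0, hrel0⟩
      have h1 : a ^ p ^ r = algebraMap F E lam * a ^ (p ^ h) ^ (jdx a) :=
        Nat.sInf_mem hnonempty
      rw [hjda] at h1
      exact ⟨⟨hne, h1⟩, hdm⟩
    · rintro ⟨⟨hne, hrelj⟩, hdm⟩
      refine ⟨⟨hne, hdm, j, hj, hrelj⟩, ?_⟩
      have hnonempty : {i | a ^ p ^ r = algebraMap F E lam * a ^ (p ^ h) ^ i}.Nonempty :=
        ⟨j, hrelj⟩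
      have h1 : a ^ p ^ r = algebraMap F E lam * a ^ (p ^ h) ^ (jdx a) :=
        Nat.sInf_mem hnonempty
      have hle : jdx a ≤ j := Nat.sInf_le hrelj
      exact huniq a hdm (jdx a) (by omega) j hj h1 hrelj
  -- conjugates of elements of Afin stay in Afin with the same minimal polynomial
  have hconjA : ∀ a : E, a ∈ Afin → ∀ k : ℕ,
      a ^ (p ^ h) ^ k ∈ Afin ∧ minpoly F (a ^ (p ^ h) ^ k) = minpoly F a := by
    intro a ha k
    rw [hAfin, mem_filter] at ha
    obtain ⟨-, hne, hdm, j, hjm, hrelj⟩ := ha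
    have hane : a ^ (p ^ h) ^ k ≠ 0 := pow_ne_zero _ hne
    have hdEg' : dEg (p ^ h) (a ^ (p ^ h) ^ k) = dEg (p ^ h) a :=
      dEg_conj hinj a (hex a) k
    have hrel' : (a ^ (p ^ h) ^ k) ^ p ^ r
        = algebraMap F E lam * (a ^ (p ^ h) ^ k) ^ (p ^ h) ^ j := by
      rw [pow_right_comm, hrelj, mul_pow, algebraMap_pow_q hF, pow_right_comm]
    have hroot' : aeval (a ^ (p ^ h) ^ k) (minpoly F a) = 0 :=
      conj_root hp hF _ a (minpoly.aeval F a) k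
    have hminp' : minpoly F (a ^ (p ^ h) ^ k) = minpoly F a :=
      (minpoly.eq_of_irreducible_of_monic (minpoly.irreducible (hint a)) hroot'
        (minpoly.monic (hint a))).symm
    refine ⟨?_, hminp'⟩
    rw [hAfin, mem_filter]
    exact ⟨mem_univ _, hane, by rw [hdEg', hdm], j, hjm, hrel'⟩
  set Bfin : Finset (Polynomial F) := Afin.image (fun a => minpoly F a) with hBfin
  -- membership facts for Bfin
  have hmemB : ∀ g ∈ Bfin, g.Monic ∧ Irreducible g ∧ g.natDegree = m ∧
      actFin p lam r m g = g ∧ (Afin.filter (fun a => minpoly F a = g)).card = m := by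
    intro g hg
    rw [hBfin, Finset.mem_image] at hg
    obtain ⟨a0, ha0, rfl⟩ := hg
    have ha0' := ha0
    rw [hAfin, mem_filter] at ha0'
    obtain ⟨-, hne0, hdm0, j0, hj0m, hrel0⟩ := ha0'
    have hmo : (minpoly F a0).Monic := minpoly.monic (hint a0)
    have hirr : Irreducible (minpoly F a0) := minpoly.irreducible (hint a0)
    have hdeg : (minpoly F a0).natDegree = m := by rw [hdegdEg a0, hdm0]
    -- the action fixes g
    have harg : (algebraMap F E lam)⁻¹ * a0 ^ p ^ r = a0 ^ (p ^ h) ^ j0 := by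
      rw [hrel0, inv_mul_cancel_left₀ hιlam]
    have hb : aeval (a0 ^ (p ^ h) ^ j0) (actFin p lam r m (minpoly F a0)) = 0 := by
      have hcalc := aeval_actFin hp hlam r m (minpoly F a0) a0
      rw [minpoly.aeval, zero_pow (pow_ne_zero r hp.ne_zero), mul_zero, harg] at hcalc
      exact hcalc
    have hdvd : minpoly F a0 ∣ actFin p lam r m (minpoly F a0) := by
      have := minpoly.dvd F (a0 ^ (p ^ h) ^ j0) hb
      rwa [(hconjA a0 ha0 j0).2] at this
    obtain ⟨hmo2, hdeg2⟩ := actFin_monic hp.ne_zero hlam hmo hdeg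
    have hact : actFin p lam r m (minpoly F a0) = minpoly F a0 :=
      monic_dvd_eq hmo hmo2 hdvd (by rw [hdeg2, hdeg])
    -- fiber has exactly m elements
    have hfiber : Afin.filter (fun a => minpoly F a = minpoly F a0)
        = (range m).image (fun k => a0 ^ (p ^ h) ^ k) := by
      apply Finset.ext
      intro x
      constructor
      · intro hx
        rw [mem_filter] at hx
        obtain ⟨hxA, hxg⟩ := hx
        have hxroot : aeval x (minpoly F a0) = 0 := by
          rw [← hxg]; exact minpoly.aeval F x
        obtain ⟨j, hjlt, hjx⟩ := root_mem_conj hp hF hm1 hE (minpoly F a0) a0 x hirr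
          (minpoly.aeval F a0) (by rw [hdeg, hdm0]) hxroot
        rw [Finset.mem_image]
        exact ⟨j, mem_range.mpr (by omega), hjx.symm⟩
      · intro hx
        rw [Finset.mem_image] at hx
        obtain ⟨k, -, rfl⟩ := hx
        rw [mem_filter]
        exact ⟨(hconjA a0 ha0 k).1, (hconjA a0 ha0 k).2⟩
    have hfibcard : (Afin.filter (fun a => minpoly F a = minpoly F a0)).card = m := by
      rw [hfiber, Finset.card_image_of_injOn, Finset.card_range]
      intro k1 hk1 k2 hk2 hval
      exact conj_inj hp a0 (hex a0) k1 (by rw [hdm0]; exact mem_range.mp hk1)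
        k2 (by rw [hdm0]; exact mem_range.mp hk2) hval
    exact ⟨hmo, hirr, hdeg, hact, hfibcard⟩
  -- Bfin is exactly the set of fixed polynomials
  have hBfin_iff : ∀ g : Polynomial F,
      (g ∈ IrrSet F m ∧ actFin p lam r m g = g) ↔ g ∈ Bfin := by
    intro g
    constructor
    · rintro ⟨⟨hmo, hirr, hdeg⟩, hact⟩
      obtain ⟨a, ha⟩ := exists_root_in hp hF hm1 hE g hmo hirr hdeg
      have hming : minpoly F a = g :=
        (minpoly.eq_of_irreducible_of_monic hirr ha hmo).symm
      have hdm : dEg (p ^ h) a = m := by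
        rw [← hdegdEg a, hming, hdeg]
      have hane : a ≠ 0 := by
        intro hcon
        have h01 : dEg (p ^ h) (0 : E) = 1 := by
          have hle : dEg (p ^ h) (0 : E) ≤ 1 := Nat.sInf_le
            ⟨le_refl 1, by rw [zero_pow (pow_ne_zero 1 (by omega))]⟩
          have hge := (dEg_spec (0 : E) (hex 0)).1
          omega
        rw [hcon, h01] at hdm
        omega
      -- find z with z ^ p ^ r = lam * a
      have hsurj : Function.Surjective fun x : E => x ^ p ^ r :=
        Finite.injective_iff_surjective.mp (inj_ppow hp r)
      obtain ⟨z, hz⟩ := hsurj (algebraMap F E lam * a)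
      simp only at hz
      have harg : (algebraMap F E lam)⁻¹ * z ^ p ^ r = a := by
        rw [hz, inv_mul_cancel_left₀ hιlam]
      have hzroot : aeval z g = 0 := by
        have hcalc := aeval_actFin hp hlam r m g z
        rw [hact, harg, ha] at hcalc
        have hιm : algebraMap F E ((lam ^ m)⁻¹) ≠ 0 := by
          intro hcon
          exact (inv_ne_zero (pow_ne_zero m hlam)) (hιinj (by rw [hcon, map_zero]))
        rcases mul_eq_zero.mp hcalc.symm with hcon | hpow0
        · exact absurd hcon hιm
        · exact pow_eq_zero_iff (pow_ne_zero r hp.ne_zero) |>.mp hpow0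
      obtain ⟨j, hjlt, hzeq⟩ := root_mem_conj hp hF hm1 hE g a z hirr ha
        (by rw [hdeg, hdm]) hzroot
      rw [hdm] at hjlt
      -- derive the relation for a
      have hkey : (a ^ p ^ r) ^ (p ^ h) ^ j = algebraMap F E lam * a := by
        rw [← pow_right_comm, ← hzeq, hz]
      have hstep : a ^ p ^ r = algebraMap F E lam * a ^ (p ^ h) ^ (m - j) := by
        have h1 : ((a ^ p ^ r) ^ (p ^ h) ^ j) ^ (p ^ h) ^ (m - j)
            = (algebraMap F E lam * a) ^ (p ^ h) ^ (m - j) := by rw [hkey]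
        rw [← pow_pow_add, Nat.add_sub_cancel' (le_of_lt hjlt), hall,
          mul_pow, algebraMap_pow_q hF] at h1
        exact h1
      have hexistj : ∃ j', j' < m ∧
          a ^ p ^ r = algebraMap F E lam * a ^ (p ^ h) ^ j' := by
        rcases Nat.eq_zero_or_pos j with rfl | hjpos
        · refine ⟨0, by omega, ?_⟩
          rw [Nat.sub_zero] at hstep
          rw [hstep, hall a, pow_zero, pow_one]
        · exact ⟨m - j, by omega, hstep⟩
      have haA : a ∈ Afin := by
        rw [hAfin, mem_filter]
        exact ⟨mem_univ _, hane, hdm, hexistj⟩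
      rw [hBfin, Finset.mem_image]
      exact ⟨a, haA, hming⟩
    · intro hg
      obtain ⟨hmo, hirr, hdeg, hact, -⟩ := hmemB g hg
      exact ⟨⟨hmo, hirr, hdeg⟩, hact⟩
  -- cardinality of the set of fixed polynomials
  have hcardFix : Nat.card {g : Polynomial F // g ∈ IrrSet F m ∧
      actFin p lam r m g = g} = Bfin.card := by
    rw [Nat.card_congr (Equiv.subtypeEquivRight hBfin_iff),
      Nat.card_eq_fintype_card, Fintype.card_coe]
  -- Afin.card = m * Bfin.card
  have hAB : Afin.card = m * Bfin.card := by
    rw [Finset.card_eq_sum_card_fiberwise (f := fun a => minpoly F a) (t := Bfin)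
      (fun a ha => Finset.mem_image_of_mem _ ha)]
    rw [Finset.sum_congr rfl (fun g hg => (hmemB g hg).2.2.2.2)]
    rw [Finset.sum_const, smul_eq_mul, mul_comm]
  -- Moebius counts per j
  have hMob : ∀ j : ℕ,
      (∑ d ∈ m.divisors, (ArithmeticFunction.moebius d : ℚ) *
        (Ncount p h F E lam r j (m / d) : ℚ))
      = ((univ.filter (fun a : E => (a ≠ 0 ∧
          a ^ p ^ r = algebraMap F E lam * a ^ (p ^ h) ^ j) ∧
          dEg (p ^ h) a = m)).card : ℚ) := by
    intro j
    have hZ := moebius_count hp hF hm1 hE lam r j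
    have hconv : Nat.card {a : E // (a ≠ 0 ∧
        a ^ p ^ r = algebraMap F E lam * a ^ (p ^ h) ^ j) ∧
        dEg (p ^ h) a = m} = (univ.filter (fun a : E => (a ≠ 0 ∧
        a ^ p ^ r = algebraMap F E lam * a ^ (p ^ h) ^ j) ∧
        dEg (p ^ h) a = m)).card := by
      rw [Nat.card_eq_fintype_card, Fintype.card_subtype]
    rw [hconv] at hZ
    calc (∑ d ∈ m.divisors, (ArithmeticFunction.moebius d : ℚ) *
        (Ncount p h F E lam r j (m / d) : ℚ))
        = ((∑ d ∈ m.divisors, (ArithmeticFunction.moebius d : ℤ) *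
          (Ncount p h F E lam r j (m / d) : ℤ) : ℤ) : ℚ) := by push_cast; ring
      _ = _ := by rw [hZ]; push_cast; ring
  -- final arithmetic
  rw [hcardFix]
  rw [Finset.sum_congr rfl (fun j _ => hMob j)]
  rw [← Nat.cast_sum, ← hB1, hAB]
  have hm0 : (m : ℚ) ≠ 0 := by positivity
  push_cast
  field_simp
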